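/- Let $\Omega\subset\mathbb{R}^3$ be open, let $s:\Omega\to\mathbb{R}$ be differentiable, and let $n:\Omega\to\mathbb{R}^3$ be differentiable with $|n(x)|=1$ for all $x\in\Omega$. Define $Q(x)=s(x)\big(n(x)\otimes n(x)-\tfrac13\mathbf{1}\big)$. Then at every $x\in\Omega$, $|\nabla Q(x)|^2=\tfrac23|\nabla s(x)|^2+2\,s(x)^2\,|\nabla n(x)|^2$. -/

import Mathlib

open Matrix

private lemma algk (n b : Fin 3 → ℝ) (a s : ℝ) (h1 : ∑ i : Fin 3, n i * n i = 1)
    (h2 : ∑ i : Fin 3, n i * b i = 0) :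
    ∑ i : Fin 3, ∑ j : Fin 3,
        (a * (n i * n j - (1/3) * (if i = j then (1:ℝ) else 0)) + s * (b i * n j + n i * b j)) ^ 2
      = (2/3) * a ^ 2 + 2 * s ^ 2 * ∑ i : Fin 3, b i ^ 2 := by
  simp only [Fin.sum_univ_three] at *
  norm_num [Fin.ext_iff]
  set S2 := n 0 * n 0 + n 1 * n 1 + n 2 * n 2 with hS2
  set P := n 0 * b 0 + n 1 * b 1 + n 2 * b 2 with hP
  linear_combination (a^2*(S2+1/3) + 2*s^2*(b 0 ^2 + b 1 ^2 + b 2 ^2)) * h1 +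
    (2*a*s*(2*S2-2/3) + 2*s^2*P) * h2


/-- The uniaxial tensor field `Q(x) = s(x)(n(x)⊗n(x) - 1/3·𝟙)`. -/
noncomputable def uniaxialQ (s : (Fin 3 → ℝ) → ℝ) (n : (Fin 3 → ℝ) → Fin 3 → ℝ)
    (x : Fin 3 → ℝ) : Matrix (Fin 3) (Fin 3) ℝ :=
  s x • (vecMulVec (n x) (n x) - (1 / 3 : ℝ) • (1 : Matrix (Fin 3) (Fin 3) ℝ))

/-- if `s` and `n` are differentiable on an open set `Ω ⊂ ℝ³` with `|n| = 1`
on `Ω`, and `Q = s(n⊗n - 1/3·𝟙)`, then at every `x ∈ Ω`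
`|∇Q|² = (2/3)|∇s|² + 2s²|∇n|²` (with `|∇Q|² = ∑ Q_{ij,k}²`, `|∇n|² = ∑ n_{i,k}²`). -/
theorem uniaxial_gradient_identity (Ω : Set (Fin 3 → ℝ)) (hΩ : IsOpen Ω)
    (s : (Fin 3 → ℝ) → ℝ) (n : (Fin 3 → ℝ) → Fin 3 → ℝ)
    (hs : ∀ x ∈ Ω, DifferentiableAt ℝ s x)
    (hn : ∀ x ∈ Ω, DifferentiableAt ℝ n x)
    (hunit : ∀ x ∈ Ω, n x ⬝ᵥ n x = 1) :
    ∀ x ∈ Ω,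
      ∑ i : Fin 3, ∑ j : Fin 3, ∑ k : Fin 3,
          (fderiv ℝ (fun y => uniaxialQ s n y i j) x (Pi.single k 1)) ^ 2
        = (2 / 3) * ∑ k : Fin 3, (fderiv ℝ s x (Pi.single k 1)) ^ 2 +
          2 * s x ^ 2 * ∑ i : Fin 3, ∑ k : Fin 3,
            (fderiv ℝ (fun y => n y i) x (Pi.single k 1)) ^ 2 := by
  intro x hx
  -- component differentiability and derivatives
  have hni : ∀ i : Fin 3, DifferentiableAt ℝ (fun y => n y i) x := fun i =>
    differentiableAt_pi.mp (hn x hx) i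
  set L : Fin 3 → ((Fin 3 → ℝ) →L[ℝ] ℝ) := fun i => fderiv ℝ (fun y => n y i) x with hL
  set a : Fin 3 → ℝ := fun k => fderiv ℝ s x (Pi.single k 1) with ha
  set b : Fin 3 → Fin 3 → ℝ := fun i k => L i (Pi.single k 1) with hb
  have h1 : ∑ i : Fin 3, n x i * n x i = 1 := by
    have := hunit x hx
    simpa [dotProduct] using this
  -- constraint: ∑ i, n x i * b i k = 0
  have hgderiv : HasFDerivAt (fun y => ∑ i : Fin 3, n y i * n y i)
      (∑ i : Fin 3, (n x i • L i + n x i • L i)) x := by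
    apply HasFDerivAt.fun_sum
    intro i _
    exact ((hni i).hasFDerivAt.mul (hni i).hasFDerivAt)
  have hfzero : fderiv ℝ (fun y => ∑ i : Fin 3, n y i * n y i) x = 0 := by
    have heq : (fun y => ∑ i : Fin 3, n y i * n y i) =ᶠ[nhds x] fun _ => 1 := by
      filter_upwards [hΩ.mem_nhds hx] with y hy
      have := hunit y hy
      simpa [dotProduct] using this
    rw [heq.fderiv_eq]
    exact fderiv_const_apply 1
  have h2 : ∀ k : Fin 3, ∑ i : Fin 3, n x i * b i k = 0 := by
    intro k
    have hz : (∑ i : Fin 3, (n x i • L i + n x i • L i)) = 0 := by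
      rw [← hgderiv.fderiv, hfzero]
    have := congrArg (fun T : (Fin 3 → ℝ) →L[ℝ] ℝ => T (Pi.single k 1)) hz
    simp only [ContinuousLinearMap.sum_apply, ContinuousLinearMap.add_apply,
      ContinuousLinearMap.smul_apply, ContinuousLinearMap.zero_apply, smul_eq_mul] at this
    have : ∑ i : Fin 3, (n x i * b i k + n x i * b i k) = 0 := by
      simpa [hb] using this
    rw [Finset.sum_add_distrib] at this
    linarith
  -- entrywise derivative of Q
  have hQ : ∀ i j k : Fin 3,
      fderiv ℝ (fun y => uniaxialQ s n y i j) x (Pi.single k 1)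
        = a k * (n x i * n x j - (1/3) * (if i = j then (1:ℝ) else 0))
          + s x * (b i k * n x j + n x i * b j k) := by
    intro i j k
    have hentry : (fun y => uniaxialQ s n y i j)
        = fun y => s y * (n y i * n y j - (1/3) * (if i = j then (1:ℝ) else 0)) := by
      funext y
      simp [uniaxialQ, vecMulVec, Matrix.one_apply, Matrix.smul_apply, Matrix.sub_apply,
        mul_comm]
    rw [hentry]
    have hd : HasFDerivAt
        (fun y => s y * (n y i * n y j - (1/3) * (if i = j then (1:ℝ) else 0)))
        (s x • ((n x i • L j + n x j • L i)) +
          (n x i * n x j - (1/3) * (if i = j then (1:ℝ) else 0)) • fderiv ℝ s x) x := by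
      exact (hs x hx).hasFDerivAt.mul (((hni i).hasFDerivAt.mul (hni j).hasFDerivAt).sub_const _)
    rw [hd.fderiv]
    simp only [ContinuousLinearMap.add_apply, ContinuousLinearMap.smul_apply, smul_eq_mul]
    ring
  simp only [hQ]
  have reorder : ∀ (f : Fin 3 → Fin 3 → Fin 3 → ℝ),
      ∑ i : Fin 3, ∑ j : Fin 3, ∑ k : Fin 3, f i j k
        = ∑ k : Fin 3, ∑ i : Fin 3, ∑ j : Fin 3, f i j k := by
    intro f
    simp only [Fin.sum_univ_three]
    ring
  rw [reorder]
  have key : ∀ k : Fin 3, ∑ i : Fin 3, ∑ j : Fin 3,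
      (a k * (n x i * n x j - (1/3) * (if i = j then (1:ℝ) else 0))
        + s x * (b i k * n x j + n x i * b j k)) ^ 2
      = (2/3) * a k ^ 2 + 2 * (s x) ^ 2 * ∑ i : Fin 3, b i k ^ 2 :=
    fun k => algk (n x) (fun i => b i k) (a k) (s x) h1 (h2 k)
  rw [Finset.sum_congr rfl fun k _ => key k]
  simp only [Fin.sum_univ_three]
  ring
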